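/- Let P(λ) = ∑_{k=0}^d λ^k P_k be a regular n×n matrix polynomial over a field F of odd degree d = 2s+1, let σ ∈ {1,−1}, and let L(λ) be the block Kronecker pencil built from a pencil λB+A of size (s+1)n×(s+1)n satisfying (Λ_s(λ)^T⊗I_n)(λB+A)(Λ_s(λ)⊗I_n) = P(λ). If λ0 ∈ F and z ∈ F^{dn} satisfy z ≠ 0 and L(λ0)z = 0, then the (s+1)-th n×n block x of z (the entries in positions sn+1, …, (s+1)n) satisfies x ≠ 0 and P(λ0)x = 0; that is, x is a right eigenvector of P with eigenvalue λ0. -/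

import Mathlib

open Polynomial Matrix
open scoped Kronecker

noncomputable section

/-- Entrywise inclusion of a constant matrix into polynomial matrices. -/
def matC {F : Type} [Field F] {m l : Type*} (M : Matrix m l F) : Matrix m l (Polynomial F) :=
  M.map fun a => (C a : Polynomial F)

/-- The pencil `λ ↦ A + λ B`, represented as a matrix over `F[λ]`. -/
def pencil {F : Type} [Field F] {m l : Type*} (A B : Matrix m l F) :
    Matrix m l (Polynomial F) :=
  matC A + (X : Polynomial F) • matC B

/-- Grade-`g` reversal `rev_g`, applied entrywise. -/
def revMat {F : Type} [Field F] {m l : Type*} (g : ℕ) (M : Matrix m l (Polynomial F)) :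
    Matrix m l (Polynomial F) :=
  M.map fun q => q.reflect g

/-- Entrywise evaluation of a polynomial matrix at a point. -/
def evalMat {F : Type} [Field F] {m l : Type*} (a : F) (M : Matrix m l (Polynomial F)) :
    Matrix m l F :=
  M.map fun q => q.eval a

/-- The matrix polynomial `P(λ) = ∑_{k=0}^d λ^k P_k` built from its coefficients. -/
def polyOfCoeffs {F : Type} [Field F] {n : ℕ} (d : ℕ) (Pc : ℕ → Matrix (Fin n) (Fin n) F) :
    Matrix (Fin n) (Fin n) (Polynomial F) :=
  ∑ k ∈ Finset.range (d + 1), (X : Polynomial F) ^ k • matC (Pc k)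

/-- The `(i,j)` block of a block-partitioned matrix. -/
def blk {α p q n m : Type*} (A : Matrix (p × n) (q × m) α) (i : p) (j : q) :
    Matrix n m α :=
  Matrix.of fun r c => A (i, r) (j, c)

/-- `Λ_s(λ) ⊗ I_n`, an `(s+1)n × n` polynomial matrix whose `i`-th block is `λ^{s-i} I_n`. -/
def Lam (F : Type) [Field F] (s n : ℕ) :
    Matrix (Fin (s+1) × Fin n) (Fin n) (Polynomial F) :=
  Matrix.of fun p c => if p.2 = c then (X : Polynomial F) ^ (s - (p.1 : ℕ)) else 0

/-- The pencil `L_s(λ) ∈ F[λ]^{s×(s+1)}` with `-1` on the diagonal and `λ` on the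
superdiagonal. -/
def Lpen (F : Type) [Field F] (s : ℕ) : Matrix (Fin s) (Fin (s+1)) (Polynomial F) :=
  Matrix.of fun i j =>
    if (j : ℕ) = (i : ℕ) then -1 else if (j : ℕ) = (i : ℕ) + 1 then X else 0

/-- The block Kronecker pencil `[[λB+A, L_s(λ)ᵀ⊗I_n],[σ L_s(λ)⊗I_n, 0]]` associated with a
pencil `M = λB+A` of size `(s+1)n × (s+1)n`. -/
def blockKron (F : Type) [Field F] (s n : ℕ) (σ : F)
    (M : Matrix (Fin (s+1) × Fin n) (Fin (s+1) × Fin n) (Polynomial F)) :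
    Matrix ((Fin (s+1) × Fin n) ⊕ (Fin s × Fin n)) ((Fin (s+1) × Fin n) ⊕ (Fin s × Fin n))
      (Polynomial F) :=
  Matrix.fromBlocks M (Lpen F s ⊗ₖ (1 : Matrix (Fin n) (Fin n) (Polynomial F)))ᵀ
    (σ • (Lpen F s ⊗ₖ (1 : Matrix (Fin n) (Fin n) (Polynomial F)))) 0

/-- `L` is a linearization of `P`: there are unimodular `U`, `V` with
`U L V = diag(I_m, P)` (up to the fixed identification of index sets). -/
def IsLinearization {F : Type} [Field F] (m : ℕ) {ι ρ : Type*} [Fintype ι] [DecidableEq ι]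
    [Fintype ρ] [DecidableEq ρ] (L : Matrix ι ι (Polynomial F))
    (P : Matrix ρ ρ (Polynomial F)) : Prop :=
  ∃ (e : (Fin m ⊕ ρ) ≃ ι) (U V : Matrix ι ι (Polynomial F)),
    IsUnit U.det ∧ IsUnit V.det ∧
      U * L * V =
        (Matrix.fromBlocks (1 : Matrix (Fin m) (Fin m) (Polynomial F)) 0 0 P).submatrix
          e.symm e.symm

/-- The block conditions `∑_{i+j=d+2-k} B_{ij} + ∑_{i+j=d+1-k} A_{ij} = P_k` for
`k = 0,…,d` (blocks are indexed here `0`-based, so `i+j` `1`-based is `i+j+2` `0`-based). -/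
def blockConds {F : Type} [Field F] {s n : ℕ} (d : ℕ) (Pc : ℕ → Matrix (Fin n) (Fin n) F)
    (A B : Matrix (Fin (s+1) × Fin n) (Fin (s+1) × Fin n) F) : Prop :=
  ∀ k, k ≤ d →
    (∑ p ∈ Finset.univ.filter
        (fun p : Fin (s+1) × Fin (s+1) => (p.1 : ℕ) + (p.2 : ℕ) + 2 + k = d + 2),
        blk B p.1 p.2) +
      (∑ p ∈ Finset.univ.filter
        (fun p : Fin (s+1) × Fin (s+1) => (p.1 : ℕ) + (p.2 : ℕ) + 2 + k = d + 1),
        blk A p.1 p.2) = Pc k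

/-- `L̂_t(λ) ⊗ I_n` (with `t = u+1`): first block column zero, remaining block columns
`L_{t-1}(λ) ⊗ I_n`; the column index is split as `Fin n ⊕ (Fin t × Fin n)`. -/
def LhatB (F : Type) [Field F] (u n : ℕ) :
    Matrix (Fin u × Fin n) (Fin n ⊕ Fin (u+1) × Fin n) (Polynomial F) :=
  Matrix.of fun p q =>
    match q with
    | Sum.inl _ => 0
    | Sum.inr c => (Lpen F u ⊗ₖ (1 : Matrix (Fin n) (Fin n) (Polynomial F))) p c

/-- The modified block Kronecker pencil `[[λB+A, L̂_t(λ)ᵀ⊗I_n],[σ L̂_t(λ)⊗I_n, 0]]`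
(with `t = u+1`). -/
def modBK (F : Type) [Field F] (u n : ℕ) (σ : F)
    (M : Matrix (Fin n ⊕ Fin (u+1) × Fin n) (Fin n ⊕ Fin (u+1) × Fin n) (Polynomial F)) :
    Matrix ((Fin n ⊕ Fin (u+1) × Fin n) ⊕ Fin u × Fin n)
      ((Fin n ⊕ Fin (u+1) × Fin n) ⊕ Fin u × Fin n) (Polynomial F) :=
  Matrix.fromBlocks M (LhatB F u n)ᵀ (σ • LhatB F u n) 0

/-- `Λ̂_t(λ) ⊗ I_n` (with `t = u+1`): the `(t+1)n × 2n` polynomial matrix whose transpose has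
block rows `(I_n, 0, …, 0)` and `(0, λ^{t-1}I_n, …, λ I_n, I_n)`. -/
def LamHatB (F : Type) [Field F] (u n : ℕ) :
    Matrix (Fin n ⊕ Fin (u+1) × Fin n) (Fin 2 × Fin n) (Polynomial F) :=
  Matrix.of fun q c =>
    match q with
    | Sum.inl r => if c.1 = 0 ∧ c.2 = r then 1 else 0
    | Sum.inr p => if c.1 = 1 ∧ c.2 = p.2 then (X : Polynomial F) ^ (u - (p.1 : ℕ)) else 0

/-- `Λ̃_t(λ) ⊗ I_n` (with `t = u+1`): the `(t+1)n × 2n` polynomial matrix whose transpose has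
block rows `(I_n, 0, …, 0)` and `(0, I_n, λ I_n, …, λ^{t-1} I_n)`. -/
def LamTildeB (F : Type) [Field F] (u n : ℕ) :
    Matrix (Fin n ⊕ Fin (u+1) × Fin n) (Fin 2 × Fin n) (Polynomial F) :=
  Matrix.of fun q c =>
    match q with
    | Sum.inl r => if c.1 = 0 ∧ c.2 = r then 1 else 0
    | Sum.inr p => if c.1 = 1 ∧ c.2 = p.2 then (X : Polynomial F) ^ (p.1 : ℕ) else 0

/-- A `2n × 2n` matrix assembled from four `n × n` blocks, indexed by `Fin 2 × Fin n`. -/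
def twoBlock {α : Type*} {n : ℕ} (W₁₁ W₁₂ W₂₁ W₂₂ : Matrix (Fin n) (Fin n) α) :
    Matrix (Fin 2 × Fin n) (Fin 2 × Fin n) α :=
  Matrix.of fun p q =>
    if p.1 = 0 then (if q.1 = 0 then W₁₁ p.2 q.2 else W₁₂ p.2 q.2)
    else (if q.1 = 0 then W₂₁ p.2 q.2 else W₂₂ p.2 q.2)

/-- `Λ_t(λ) ⊗ I_n` (with `t = u+1`), over the split row index `Fin n ⊕ (Fin t × Fin n)`:
block entries `λ^t I_n, λ^{t-1} I_n, …, λ I_n, I_n`. -/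
def LamFullB (F : Type) [Field F] (u n : ℕ) :
    Matrix (Fin n ⊕ Fin (u+1) × Fin n) (Fin n) (Polynomial F) :=
  Matrix.of fun q c =>
    match q with
    | Sum.inl r => if r = c then (X : Polynomial F) ^ (u + 1) else 0
    | Sum.inr p => if p.2 = c then (X : Polynomial F) ^ (u - (p.1 : ℕ)) else 0

/-- `N̂_t(λ) = Ĥ_t(λ) ⊗ I_n` (with `t = u+1`): `Ĥ_t ∈ F[λ]^{(t-1)×(t+1)}` has `(i,j)` entry
`λ^{i+1-j}` if `2 ≤ j ≤ i+1` and `0` otherwise. -/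
def NhatB (F : Type) [Field F] (u n : ℕ) :
    Matrix (Fin u × Fin n) (Fin n ⊕ Fin (u+1) × Fin n) (Polynomial F) :=
  Matrix.of fun p q =>
    match q with
    | Sum.inl _ => 0
    | Sum.inr c =>
        if (c.1 : ℕ) ≤ (p.1 : ℕ) ∧ p.2 = c.2 then
          (X : Polynomial F) ^ ((p.1 : ℕ) - (c.1 : ℕ)) else 0

end


section Helpers

variable {F : Type} [Field F]

lemma sum_pair_eq {ι M : Type*} [Fintype ι] [DecidableEq ι] [AddCommMonoid M]
    (f : ι → M) (a b : ι) (hab : a ≠ b) (h : ∀ i, i ≠ a → i ≠ b → f i = 0) :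
    ∑ i, f i = f a + f b := by
  rw [← Finset.sum_pair hab]
  refine (Finset.sum_subset (Finset.subset_univ _) ?_).symm
  intro i _ hi
  simp only [Finset.mem_insert, Finset.mem_singleton, not_or] at hi
  exact h i hi.1 hi.2

lemma lpen_sum {s : ℕ} (lam0 : F) (i : Fin s) (g : Fin (s+1) → F) :
    ∑ j, ((Lpen F s i j).eval lam0) * g j = -(g i.castSucc) + lam0 * g i.succ := by
  rw [sum_pair_eq _ i.castSucc i.succ (by simp [Fin.ext_iff])]
  · simp [Lpen, Fin.ext_iff]
  · intro j hj1 hj2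
    have h1 : (j : ℕ) ≠ (i : ℕ) := fun h => hj1 (by simp [Fin.ext_iff, h])
    have h2 : (j : ℕ) ≠ (i : ℕ) + 1 := fun h => hj2 (by simp [Fin.ext_iff, h])
    simp [Lpen, h1, h2]

end Helpers

/-- (Eigenvector recovery at finite eigenvalues, odd degree `d = 2s+1`.)
If `z ≠ 0` and `L(λ0)z = 0` for a block Kronecker pencil `L` of a regular `P`, then the
`(s+1)`-th `n × n` block of `z` is a right eigenvector of `P` with eigenvalue `λ0`. -/
theorem stmt_14 {F : Type} [Field F] (n s : ℕ)
    (Pc : ℕ → Matrix (Fin n) (Fin n) F)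
    (hdeg : Pc (2*s+1) ≠ 0)
    (hreg : (polyOfCoeffs (2*s+1) Pc).det ≠ 0)
    (σ : F) (hσ : σ = 1 ∨ σ = -1)
    (A B : Matrix (Fin (s+1) × Fin n) (Fin (s+1) × Fin n) F)
    (hM : (Lam F s n)ᵀ * pencil A B * Lam F s n = polyOfCoeffs (2*s+1) Pc)
    (lam0 : F) (z : ((Fin (s+1) × Fin n) ⊕ (Fin s × Fin n)) → F)
    (hz : z ≠ 0)
    (hLz : (evalMat lam0 (blockKron F s n σ (pencil A B))).mulVec z = 0) :
    (fun r => z (Sum.inl (Fin.last s, r))) ≠ 0 ∧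
      (evalMat lam0 (polyOfCoeffs (2*s+1) Pc)).mulVec
        (fun r => z (Sum.inl (Fin.last s, r))) = 0 := by
  classical
  have hσ0 : σ ≠ 0 := by rcases hσ with h | h <;> simp [h]
  set K0 : Matrix (Fin s × Fin n) (Fin (s+1) × Fin n) F :=
    evalMat lam0 (Lpen F s ⊗ₖ (1 : Matrix (Fin n) (Fin n) (Polynomial F))) with hK0
  set M0 : Matrix (Fin (s+1) × Fin n) (Fin (s+1) × Fin n) F :=
    evalMat lam0 (pencil A B) with hM0
  set L0 : Matrix (Fin (s+1) × Fin n) (Fin n) F := evalMat lam0 (Lam F s n) with hL0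
  set P0 : Matrix (Fin n) (Fin n) F := evalMat lam0 (polyOfCoeffs (2*s+1) Pc) with hP0
  set wz : Fin (s+1) × Fin n → F := fun p => z (Sum.inl p) with hwz
  set yz : Fin s × Fin n → F := fun p => z (Sum.inr p) with hyz
  -- split the block equation
  have hz1 : M0.mulVec wz + K0ᵀ.mulVec yz = 0 := by
    funext p
    have h := congrFun hLz (Sum.inl p)
    simp only [Matrix.mulVec, dotProduct, Fintype.sum_sum_type, hM0, hK0, evalMat,
      Matrix.map_apply, blockKron, Matrix.fromBlocks_apply₁₁, Matrix.fromBlocks_apply₁₂,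
      Pi.zero_apply, Pi.add_apply, Matrix.transpose_apply, hwz, hyz] at h ⊢
    exact h
  have hz2 : K0.mulVec wz = 0 := by
    funext p
    have h := congrFun hLz (Sum.inr p)
    simp only [Matrix.mulVec, dotProduct, Fintype.sum_sum_type, evalMat, Matrix.map_apply,
      blockKron, Matrix.fromBlocks_apply₂₁, Matrix.fromBlocks_apply₂₂, Pi.zero_apply,
      Matrix.zero_apply, Polynomial.eval_zero, zero_mul, Finset.sum_const_zero, add_zero,
      Matrix.smul_apply, Polynomial.eval_smul, smul_eq_mul, mul_assoc, ← Finset.mul_sum] at h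
    rcases mul_eq_zero.mp h with h' | h'
    · exact absurd h' hσ0
    · simp only [Matrix.mulVec, dotProduct, hK0, evalMat, Matrix.map_apply, Pi.zero_apply,
        hwz]
      exact h'
  -- component form of hz2 : the shift relations
  have hstep : ∀ (i : Fin s) (r : Fin n),
      wz (i.castSucc, r) = lam0 * wz (i.succ, r) := by
    intro i r
    have h := congrFun hz2 (i, r)
    simp only [Matrix.mulVec, dotProduct, hK0, evalMat, Matrix.map_apply,
      Matrix.kroneckerMap_apply, Fintype.sum_prod_type, Matrix.one_apply,
      Polynomial.eval_mul, apply_ite (Polynomial.eval lam0), Polynomial.eval_one,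
      Polynomial.eval_zero, mul_ite, mul_one, mul_zero, ite_mul, zero_mul,
      Finset.sum_ite_eq, Finset.mem_univ, if_true, Pi.zero_apply] at h
    rw [lpen_sum lam0 i (fun j => wz (j, r))] at h
    linear_combination -h
  -- all blocks of w are powers of lam0 times the last block
  have hwpow : ∀ (i : Fin (s+1)) (r : Fin n),
      wz (i, r) = lam0 ^ (s - (i : ℕ)) * wz (Fin.last s, r) := by
    have haux : ∀ k, k ≤ s → ∀ r, wz (⟨s - k, by omega⟩, r)
        = lam0 ^ k * wz (Fin.last s, r) := by
      intro k
      induction k with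
      | zero =>
        intro _ r
        have : (⟨s - 0, by omega⟩ : Fin (s+1)) = Fin.last s := by
          simp [Fin.ext_iff]
        rw [this]; ring
      | succ k ih =>
        intro hk r
        have hk' : k ≤ s := by omega
        set i : Fin s := ⟨s - (k+1), by omega⟩ with hi
        have h1 : (⟨s - (k+1), by omega⟩ : Fin (s+1)) = i.castSucc := by
          simp [Fin.ext_iff, hi]
        have h2 : i.succ = (⟨s - k, by omega⟩ : Fin (s+1)) := by
          simp [Fin.ext_iff, hi]; omega
        rw [h1, hstep i r, h2, ih hk' r]; ring
    intro i r
    have hi : (i : ℕ) ≤ s := by omega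
    have := haux (s - (i : ℕ)) (by omega) r
    have hii : (⟨s - (s - (i : ℕ)), by omega⟩ : Fin (s+1)) = i := by
      simp [Fin.ext_iff]; omega
    rwa [hii] at this
  set x : Fin n → F := fun r => z (Sum.inl (Fin.last s, r)) with hx
  -- Λ0 x = w
  have hLx : L0.mulVec x = wz := by
    funext p
    obtain ⟨i, r⟩ := p
    have : L0.mulVec x (i, r) = lam0 ^ (s - (i : ℕ)) * x r := by
      simp [Matrix.mulVec, dotProduct, hL0, evalMat, Matrix.map_apply, Lam,
        apply_ite (Polynomial.eval lam0), ite_mul, zero_mul, Finset.sum_ite_eq,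
        Finset.mem_univ]
    rw [this, hwpow i r]
  -- K0 * L0 = 0
  have hKL : K0 * L0 = 0 := by
    ext ⟨i, r⟩ c
    have hcalc : (K0 * L0) (i, r) c
        = ∑ j, ((Lpen F s i j).eval lam0) * (if r = c then lam0 ^ (s - (j : ℕ)) else 0) := by
      simp [Matrix.mul_apply, hK0, hL0, evalMat, Matrix.map_apply, Matrix.kroneckerMap_apply,
        Fintype.sum_prod_type, Matrix.one_apply, Lam, apply_ite (Polynomial.eval lam0),
        mul_ite, mul_zero, mul_one, ite_mul, zero_mul, Finset.sum_ite_eq, Finset.sum_ite_eq',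
        Finset.mem_univ]
    rw [hcalc, lpen_sum lam0 i (fun j => if r = c then lam0 ^ (s - (j : ℕ)) else 0)]
    have hlt : (i : ℕ) < s := i.isLt
    have hpow : lam0 * lam0 ^ (s - ((i : ℕ) + 1)) = lam0 ^ (s - (i : ℕ)) := by
      rw [← pow_succ']
      congr 1
      omega
    by_cases hrc : r = c
    · simp only [Fin.coe_castSucc, Fin.val_succ, if_pos hrc, Matrix.zero_apply]
      rw [hpow]; ring
    · simp [hrc]
  -- evaluate hM at lam0
  have hMe : L0ᵀ * M0 * L0 = P0 := by
    have h := congrArg (fun M : Matrix _ _ (Polynomial F) => M.map (evalRingHom lam0)) hM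
    simp only [Matrix.map_mul, Matrix.transpose_map] at h
    simpa only [hL0, hM0, hP0, evalMat, Polynomial.coe_evalRingHom] using h
  constructor
  · -- x ≠ 0
    intro hx0
    have hw0 : wz = 0 := by
      funext p
      obtain ⟨i, r⟩ := p
      have h0 : wz (Fin.last s, r) = 0 := by simpa using congrFun hx0 r
      simp [hwpow i r, h0]
    have hKy : K0ᵀ.mulVec yz = 0 := by
      have := hz1
      rw [hw0] at this
      simpa using this
    have hy0 : ∀ (m : ℕ) (hm : m < s) (r : Fin n), yz (⟨m, hm⟩, r) = 0 := by
      intro m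
      induction m with
      | zero =>
        intro hm r
        have h := congrFun hKy ((⟨0, by omega⟩ : Fin (s+1)), r)
        simp only [Matrix.mulVec, dotProduct, Matrix.transpose_apply, hK0, evalMat,
          Matrix.map_apply, Matrix.kroneckerMap_apply, Fintype.sum_prod_type, Matrix.one_apply,
          Polynomial.eval_mul, apply_ite (Polynomial.eval lam0), Polynomial.eval_one,
          Polynomial.eval_zero, mul_ite, mul_one, mul_zero, ite_mul, zero_mul,
          Finset.sum_ite_eq, Finset.sum_ite_eq', Finset.mem_univ, if_true, Pi.zero_apply] at h
        rw [Finset.sum_eq_single (⟨0, hm⟩ : Fin s)] at h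
        · simpa [Lpen] using h
        · intro j _ hj
          have h1 : (0 : ℕ) ≠ (j : ℕ) := fun hc => hj (by simp [Fin.ext_iff]; omega)
          simp [Lpen, h1]
        · simp
      | succ k ih =>
        intro hm r
        have h := congrFun hKy ((⟨k+1, by omega⟩ : Fin (s+1)), r)
        simp only [Matrix.mulVec, dotProduct, Matrix.transpose_apply, hK0, evalMat,
          Matrix.map_apply, Matrix.kroneckerMap_apply, Fintype.sum_prod_type, Matrix.one_apply,
          Polynomial.eval_mul, apply_ite (Polynomial.eval lam0), Polynomial.eval_one,
          Polynomial.eval_zero, mul_ite, mul_one, mul_zero, ite_mul, zero_mul,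
          Finset.sum_ite_eq, Finset.sum_ite_eq', Finset.mem_univ, if_true, Pi.zero_apply] at h
        rw [sum_pair_eq _ (⟨k+1, hm⟩ : Fin s) (⟨k, by omega⟩ : Fin s)
          (by simp [Fin.ext_iff])
          (fun j hj1 hj2 => by
            have h1 : (k+1 : ℕ) ≠ (j : ℕ) := fun hc => hj1 (by simp [Fin.ext_iff]; omega)
            have h2 : (k+1 : ℕ) ≠ (j : ℕ) + 1 := fun hc => hj2 (by simp [Fin.ext_iff]; omega)
            simp [Lpen, h1, h2, show k ≠ (j : ℕ) by omega])] at h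
        have hik : yz ((⟨k, by omega⟩ : Fin s), r) = 0 := ih (by omega) r
        simp only [Lpen, Matrix.of_apply] at h
        norm_num at h
        simpa [hik] using h
    apply hz
    funext q
    rcases q with p | p
    · exact congrFun hw0 p
    · obtain ⟨⟨m, hm⟩, r⟩ := p
      exact hy0 m hm r
  · -- P(lam0) x = 0
    calc (evalMat lam0 (polyOfCoeffs (2*s+1) Pc)).mulVec x
        = (L0ᵀ * M0 * L0).mulVec x := by rw [hMe]
      _ = L0ᵀ.mulVec (M0.mulVec (L0.mulVec x)) := by
          rw [← Matrix.mulVec_mulVec, ← Matrix.mulVec_mulVec]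
      _ = L0ᵀ.mulVec (M0.mulVec wz) := by rw [hLx]
      _ = L0ᵀ.mulVec (-(K0ᵀ.mulVec yz)) := by
          have h : M0.mulVec wz = -(K0ᵀ.mulVec yz) := by
            have := hz1
            rwa [add_eq_zero_iff_eq_neg] at this
          rw [h]
      _ = -(((K0 * L0)ᵀ).mulVec yz) := by
          rw [Matrix.mulVec_neg, Matrix.mulVec_mulVec, Matrix.transpose_mul]
      _ = 0 := by rw [hKL]; simp
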